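/- Let c = 1/√2, d = 2(√2 - 1), a(n) = ⌊cn + d⌋, f(n) = a(n) + a(n-1), and θ_n = {cn + d}. Then for all n ≥ 2: a(f(n)) = n + 1 if and only if θ_{n-1} ∈ [1 - c, 1/2]; moreover whenever a(f(n)) = n + 1 one has a(n+1) = a(n). -/

import Mathlib

open Real

lemma cnoint (c : ℝ) (hc : c = 1 / Real.sqrt 2) (m k : ℤ) (hm : m ≠ 0) :
    c * (m : ℝ) ≠ (k : ℝ) := by
  intro h
  have hs0 : (0:ℝ) < Real.sqrt 2 := by positivity
  have hs2 : Real.sqrt 2 * Real.sqrt 2 = 2 := Real.mul_self_sqrt (by norm_num)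
  have hcs : c * Real.sqrt 2 = 1 := by rw [hc]; field_simp
  have hm' : (m : ℝ) = Real.sqrt 2 * (k : ℝ) := by
    calc (m : ℝ) = Real.sqrt 2 * (c * m) := by rw [← mul_assoc, mul_comm (Real.sqrt 2) c, hcs, one_mul]
    _ = Real.sqrt 2 * k := by rw [h]
  rcases eq_or_ne k 0 with hk | hk
  · rw [hk] at hm'; simp at hm'; exact hm (by exact_mod_cast hm')
  · have hsr : Real.sqrt 2 = (m : ℝ) / (k : ℝ) := by
      have hk' : (k : ℝ) ≠ 0 := Int.cast_ne_zero.mpr hk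
      field_simp [hm']; exact hm'.symm
    have hirr : Irrational (Real.sqrt 2) := irrational_sqrt_two
    rw [hsr] at hirr
    have : ((((m : ℚ) / (k : ℚ)) : ℚ) : ℝ) = (m : ℝ) / (k : ℝ) := by push_cast; ring
    rw [← this] at hirr
    exact (Rat.not_irrational _) hirr

theorem stmt17 (c d : ℝ) (hc : c = 1 / Real.sqrt 2)
    (hd : d = 2 * (Real.sqrt 2 - 1))
    (a : ℤ → ℤ) (ha : ∀ n : ℤ, a n = ⌊c * n + d⌋)
    (f : ℤ → ℤ) (hf : ∀ n : ℤ, f n = a n + a (n - 1)) :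
    ∀ n : ℤ, 2 ≤ n →
      (a (f n) = n + 1 ↔
        Int.fract (c * ((n : ℝ) - 1) + d) ∈ Set.Icc (1 - c) (1 / 2)) ∧
      (a (f n) = n + 1 → a (n + 1) = a n) := by
  have hs0 : (0:ℝ) < Real.sqrt 2 := by positivity
  have hs2 : Real.sqrt 2 * Real.sqrt 2 = 2 := Real.mul_self_sqrt (by norm_num)
  have hcs : c * Real.sqrt 2 = 1 := by rw [hc]; field_simp
  have hc0 : 0 < c := by rw [hc]; positivity
  have hcc : c * c = 1/2 := by nlinarith [hcs, hs2, hs0]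
  have h2c : Real.sqrt 2 = 2 * c := by nlinarith [hcs, hs2, hs0]
  have hd4 : d = 4 * c - 2 := by rw [hd, h2c]; ring
  have hc1 : c < 1 := by nlinarith
  have hc34 : c < 3/4 := by nlinarith
  have hch : 1/2 < c := by nlinarith
  intro n hn
  set x : ℝ := c * ((n : ℝ) - 1) + d with hx
  set θ : ℝ := Int.fract x with hθ
  have hθ0 : 0 ≤ θ := Int.fract_nonneg _
  have hθ1 : θ < 1 := Int.fract_lt_one _
  have hxf : x - θ = (⌊x⌋ : ℝ) := Int.self_sub_fract x
  -- θ ≠ 0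
  have hθne0 : θ ≠ 0 := by
    intro h0
    apply cnoint c hc (n+3) (⌊x⌋+2) (by omega)
    have hxeq : x = (⌊x⌋ : ℝ) := by rw [← hxf, h0]; ring
    rw [hx, hd4] at hxeq
    push_cast
    linarith
  -- θ ≠ 1 - c
  have hθnec : θ ≠ 1 - c := by
    intro h0
    apply cnoint c hc (n+4) (⌊x⌋+3) (by omega)
    have hxe : x - (1 - c) = (⌊x⌋ : ℝ) := by rw [← h0]; exact hxf
    rw [hx, hd4] at hxe
    push_cast
    linarith
  set φ : ℝ := Int.fract (c * (n : ℝ) + d) with hφ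
  have hφ0 : 0 ≤ φ := Int.fract_nonneg _
  have hφθ : φ = Int.fract (θ + c) := by
    rw [hφ]
    have : c * (n : ℝ) + d = (⌊x⌋ : ℝ) + (θ + c) := by
      rw [← hxf, hx]; ring
    rw [this, Int.fract_intCast_add]
  -- floors as reals
  have hfloor_n : (⌊c * (n : ℝ) + d⌋ : ℝ) = c * (n : ℝ) + d - φ := by
    rw [hφ]; exact (Int.self_sub_fract _).symm
  have hfloor_n1 : (⌊c * ((n:ℝ) - 1) + d⌋ : ℝ) = c * ((n:ℝ) - 1) + d - θ := by
    rw [← hx, ← hxf]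
  clear_value x θ φ
  -- a (f n) formula
  have hfnr : ((f n : ℤ) : ℝ) = c * (2 * (n:ℝ) - 1) + 2 * d - φ - θ := by
    rw [hf, ha, ha]
    push_cast
    rw [hfloor_n, hfloor_n1]
    ring
  have haf : a (f n) = n + ⌊(3:ℝ)/2 - c * (θ + φ)⌋ := by
    rw [ha]
    have : c * ((f n : ℤ) : ℝ) + d = (n : ℝ) + ((3:ℝ)/2 - c * (θ + φ)) := by
      rw [hfnr]
      linear_combination (2 * (n:ℝ) - 1) * hcc + 8 * hcc + (2 * c + 1) * hd4
    rw [this, Int.floor_intCast_add]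
  rcases lt_or_gt_of_ne hθnec with hlt | hgt
  · -- case θ < 1 - c : φ = θ + c, condition fails
    have hφe : φ = θ + c := by
      rw [hφθ, Int.fract_eq_self.mpr ⟨by linarith, by linarith⟩]
    have hbig : (3:ℝ)/2 - c * (θ + φ) < 1 := by
      rw [hφe]
      have : 0 < θ := lt_of_le_of_ne hθ0 (Ne.symm hθne0)
      nlinarith
    have hfl : ⌊(3:ℝ)/2 - c * (θ + φ)⌋ < 1 := Int.floor_lt.mpr (by exact_mod_cast hbig)
    have hne : a (f n) ≠ n + 1 := by rw [haf]; omega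
    refine ⟨⟨fun h => absurd h hne, fun h => ?_⟩, fun h => absurd h hne⟩
    exfalso
    have := h.1
    linarith
  · -- case θ > 1 - c : φ = θ + c - 1
    have hφe : φ = θ + c - 1 := by
      have h1 : Int.fract (θ + c - ((1:ℤ):ℝ)) = Int.fract (θ + c) := Int.fract_sub_intCast _ _
      rw [hφθ, ← h1]
      push_cast
      exact Int.fract_eq_self.mpr ⟨by linarith, by linarith⟩
    have hy : (3:ℝ)/2 - c * (θ + φ) = 1 + c - 2 * c * θ := by
      rw [hφe]; linear_combination (-1 : ℝ) * hcc
    have hiff : a (f n) = n + 1 ↔ θ ≤ 1/2 := by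
      rw [haf]
      constructor
      · intro h
        have hfl : ⌊(3:ℝ)/2 - c * (θ + φ)⌋ = 1 := by omega
        have := Int.floor_eq_iff.mp hfl
        rw [hy] at this
        have h1 : (1:ℝ) ≤ 1 + c - 2 * c * θ := by exact_mod_cast this.1
        by_contra hcon
        push_neg at hcon
        have h2 : 2 * c * (1/2) < 2 * c * θ :=
          (mul_lt_mul_iff_right₀ (by linarith : (0:ℝ) < 2 * c)).mpr hcon
        linarith
      · intro h
        have hfl : ⌊(3:ℝ)/2 - c * (θ + φ)⌋ = 1 := by
          rw [hy]
          apply Int.floor_eq_iff.mpr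
          have h2 : 2 * c * θ ≤ 2 * c * (1/2) :=
            mul_le_mul_of_nonneg_left h (by linarith : (0:ℝ) ≤ 2 * c)
          have h3 : 0 ≤ 2 * c * θ := by positivity
          constructor
          · push_cast; linarith
          · push_cast; linarith
        omega
    constructor
    · rw [hiff]
      simp only [Set.mem_Icc, ← hx, ← hθ]
      constructor
      · intro h; exact ⟨le_of_lt hgt, h⟩
      · intro h; exact h.2
    · intro h
      have hθh : θ ≤ 1/2 := hiff.mp h
      have hfc : φ + c < 1 := by rw [hφe]; linarith
      have hfc0 : 0 ≤ φ + c := by linarith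
      have key : c * ((n:ℝ) + 1) + d = (⌊c * (n:ℝ) + d⌋ : ℝ) + (φ + c) := by
        rw [hfloor_n]; ring
      rw [ha, ha]
      have h1 : ((n + 1 : ℤ) : ℝ) = (n : ℝ) + 1 := by push_cast; ring
      rw [h1, key, Int.floor_intCast_add]
      have : ⌊φ + c⌋ = 0 := Int.floor_eq_zero_iff.mpr ⟨hfc0, hfc⟩
      omega
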